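/- Let H be a real Hilbert space, A : H → H a continuous self-adjoint nonnegative linear operator, 0 ≤ p ≤ 1, γ ≥ 1, u₀, u₁ ∈ H with ⟨Au₀,u₀⟩ > 0, and K₀, K₁ > 0 constants. Then there exist ε₀ > 0 and a constant L > 0 (both depending only on γ, p, K₀, K₁ and the data u₀, u₁, but not on ε, S or t) with the following property: if ε ∈ (0,ε₀], S > 0, and u : [0,S) → H is a C² solution of ε u''(t) + (1+t)^{-p} u'(t) + ⟨Au(t),u(t)⟩^γ A u(t) = 0 with u(0) = u₀, u'(0) = u₁, such that for all t ∈ [0,S): ⟨Au(t),u(t)⟩ > 0, |⟨u'(t), Au(t)⟩|/⟨Au(t),u(t)⟩ ≤ K₀/(1+t), and ⟨Au(t),u(t)⟩^{γ−1}|Au(t)|² ≤ K₁ (1+t)^{−(p+1)}, then for all t ∈ [0,S): [ ε ⟨Au'(t),u'(t)⟩/⟨Au(t),u(t)⟩ + ⟨Au(t),u(t)⟩^{γ−1}|Au(t)|² ] (1+t)^{p+1} ≤ L. -/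

import Mathlib

set_option maxHeartbeats 1000000

open Real
open scoped RealInnerProductSpace

/-- Auxiliary purely scalar inequality: the energy derivative is nonpositive
whenever the energy is at least `2 K₁`, provided `ε (2K₀γ + p + 1) ≤ 1`. -/
theorem apriori_H_estimate_scalar_bound (p γ ε K₀ K₁ s1 a b c d e w P snp sp Q : ℝ)
    (hp0 : 0 ≤ p) (hγ : 1 ≤ γ) (hK₀ : 0 < K₀)
    (hε : 0 < ε) (hεC : ε * (2*K₀*γ + p + 1) ≤ 1)
    (hs1 : 1 ≤ s1) (ha : 0 ≤ a) (hb : 0 ≤ b) (hc : 0 < c) (hP : 0 < P)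
    (hsp : 0 < sp) (hQ : 0 < Q)
    (hsnpQ : snp * Q = s1) (hspQ : sp * s1 = Q) (hsple : sp ≤ s1)
    (hd : |d| ≤ K₀ * c / s1)
    (hw : ε * w = -(snp * a) - P * c * e)
    (hY : P * b * Q ≤ K₁)
    (hL : 2 * K₁ ≤ (ε * a / c + P * b) * Q) :
    ((ε * (2 * w) * c - ε * a * (2 * d)) / c ^ 2
        + (2 * d * (γ - 1) * (P / c) * b + P * (2 * e))) * Q
      + (ε * a / c + P * b) * (1 * (p + 1) * sp) ≤ 0 := by
  have hs1pos : (0:ℝ) < s1 := lt_of_lt_of_le one_pos hs1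
  have hq0 : 0 ≤ a / c := div_nonneg ha hc.le
  have hy0 : 0 ≤ P * b := mul_nonneg hP.le hb
  have hC' : 0 < 2*K₀*γ + p + 1 := by nlinarith
  have hexp : (ε * a / c + P * b) * Q = ε * (a/c) * Q + P * b * Q := by
    field_simp
  have hxK : K₁ ≤ ε * (a/c) * Q := by rw [hexp] at hL; linarith
  have hyx : P * b ≤ ε * (a/c) := by
    have h1 : P * b * Q ≤ ε * (a/c) * Q := by linarith
    exact le_of_mul_le_mul_right h1 hQ
  have habs : |d / c| ≤ K₀ / s1 := by
    rw [abs_div, abs_of_pos hc, div_le_div_iff₀ hc hs1pos]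
    rw [le_div_iff₀ hs1pos] at hd
    linarith
  have hgoal_eq : ((ε * (2 * w) * c - ε * a * (2 * d)) / c ^ 2
        + (2 * d * (γ - 1) * (P / c) * b + P * (2 * e))) * Q
      + (ε * a / c + P * b) * (1 * (p + 1) * sp)
      = (-2*snp*(a/c) - 2*(ε*(a/c)*(d/c)) + 2*((d/c)*(γ-1)*(P*b)))*Q
        + (ε*(a/c)+P*b)*((p+1)*sp) := by
    have hw2 : ε * (2 * w) = 2 * (-(snp * a) - P * c * e) := by linarith
    rw [hw2]; field_simp; ring
  rw [hgoal_eq]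
  have hT1 : (-2*snp*(a/c))*Q = -2*(a/c)*s1 := by
    linear_combination (-2*(a/c)) * hsnpQ
  have hT2 : -(2*(ε*(a/c)*(d/c)))*Q ≤ 2*K₀*ε*(a/c)*sp := by
    have h1 : -(d/c) ≤ K₀/s1 := by
      have := (abs_le.1 habs).1; linarith
    have h2 : (0:ℝ) ≤ 2*ε*(a/c)*Q := by positivity
    have h3 := mul_le_mul_of_nonneg_right h1 h2
    have h4 : K₀/s1*(2*ε*(a/c)*Q) = 2*K₀*ε*(a/c)*sp := by
      rw [← hspQ]; field_simp
    linarith [h3, h4]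
  have hT3 : (2*((d/c)*(γ-1)*(P*b)))*Q ≤ 2*K₀*(γ-1)*(P*b)*sp := by
    have h1 : d/c ≤ K₀/s1 := (abs_le.1 habs).2
    have hγ1 : (0:ℝ) ≤ γ - 1 := by linarith
    have h2 : (0:ℝ) ≤ 2*(γ-1)*(P*b)*Q :=
      mul_nonneg (mul_nonneg (mul_nonneg (by norm_num) hγ1) hy0) hQ.le
    have h3 := mul_le_mul_of_nonneg_right h1 h2
    have h4 : K₀/s1*(2*(γ-1)*(P*b)*Q) = 2*K₀*(γ-1)*(P*b)*sp := by
      rw [← hspQ]; field_simp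
    linarith [h3, h4]
  have hstep2 : -2*(a/c)*s1 + 2*K₀*ε*(a/c)*sp + 2*K₀*(γ-1)*(P*b)*sp
      + (ε*(a/c)+P*b)*((p+1)*sp)
      ≤ -2*(a/c)*s1 + (2*K₀*γ+p+1)*(ε*(a/c)+P*b)*sp := by
    nlinarith [mul_nonneg (mul_nonneg (mul_nonneg hK₀.le (by linarith : (0:ℝ) ≤ γ - 1))
        (mul_nonneg hε.le hq0)) hsp.le,
      mul_nonneg (mul_nonneg hK₀.le hy0) hsp.le]
  have hstep3 : (2*K₀*γ+p+1)*(ε*(a/c)+P*b)*sp ≤ (2*K₀*γ+p+1)*(ε*(a/c)+P*b)*s1 := by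
    have h0 : (0:ℝ) ≤ (2*K₀*γ+p+1)*(ε*(a/c)+P*b) :=
      mul_nonneg hC'.le (add_nonneg (mul_nonneg hε.le hq0) hy0)
    exact mul_le_mul_of_nonneg_left hsple h0
  have hstep4 : (2*K₀*γ+p+1)*(ε*(a/c)+P*b)*s1 ≤ (2*K₀*γ+p+1)*(2*(ε*(a/c)))*s1 := by
    have h1 : ε*(a/c)+P*b ≤ 2*(ε*(a/c)) := by linarith
    have h2 := mul_le_mul_of_nonneg_left h1 hC'.le
    exact mul_le_mul_of_nonneg_right h2 hs1pos.le
  have hfin : -2*(a/c)*s1 + (2*K₀*γ+p+1)*(2*(ε*(a/c)))*s1 ≤ 0 := by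
    nlinarith [mul_nonneg (mul_nonneg hs1pos.le hq0)
      (by linarith : (0:ℝ) ≤ 1 - ε*(2*K₀*γ+p+1))]
  calc (-2*snp*(a/c) - 2*(ε*(a/c)*(d/c)) + 2*((d/c)*(γ-1)*(P*b)))*Q
        + (ε*(a/c)+P*b)*((p+1)*sp)
      = (-2*snp*(a/c))*Q + (-(2*(ε*(a/c)*(d/c))))*Q + (2*((d/c)*(γ-1)*(P*b)))*Q
        + (ε*(a/c)+P*b)*((p+1)*sp) := by ring
    _ ≤ -2*(a/c)*s1 + 2*K₀*ε*(a/c)*sp + 2*K₀*(γ-1)*(P*b)*sp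
        + (ε*(a/c)+P*b)*((p+1)*sp) := by linarith [hT1, hT2, hT3]
    _ ≤ -2*(a/c)*s1 + (2*K₀*γ+p+1)*(ε*(a/c)+P*b)*sp := hstep2
    _ ≤ -2*(a/c)*s1 + (2*K₀*γ+p+1)*(ε*(a/c)+P*b)*s1 := by linarith [hstep3]
    _ ≤ -2*(a/c)*s1 + (2*K₀*γ+p+1)*(2*(ε*(a/c)))*s1 := by linarith [hstep4]
    _ ≤ 0 := hfin

/-- A priori estimate (3.15) of Proposition 3.6: under the conditional bounds
(3.10)–(3.11) on `[0,S)`, the energy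
`H_ε(t) = [ε ⟨Au',u'⟩/⟨Au,u⟩ + ⟨Au,u⟩^{γ-1}|Au|²](1+t)^{p+1}` is bounded by a
constant `L` independent of `ε`, `S` and `t`, for every `ε` small enough. -/
theorem apriori_H_estimate
    {H : Type*} [NormedAddCommGroup H] [InnerProductSpace ℝ H]
    (A : H →L[ℝ] H)
    (hA_sa : ∀ x y : H, ⟪A x, y⟫ = ⟪x, A y⟫)
    (hA_nn : ∀ x : H, 0 ≤ ⟪A x, x⟫)
    (p γ : ℝ) (hp0 : 0 ≤ p) (hp1 : p ≤ 1) (hγ : 1 ≤ γ)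
    (u₀ u₁ : H) (hmdg : 0 < ⟪A u₀, u₀⟫)
    (K₀ K₁ : ℝ) (hK₀ : 0 < K₀) (hK₁ : 0 < K₁) :
    ∃ ε₀ > 0, ∃ L > 0, ∀ ε : ℝ, 0 < ε → ε ≤ ε₀ → ∀ S : ℝ, 0 < S →
      ∀ u u' u'' : ℝ → H,
        u 0 = u₀ → u' 0 = u₁ →
        (∀ t ∈ Set.Ico (0:ℝ) S, HasDerivWithinAt u (u' t) (Set.Ico 0 S) t) →
        (∀ t ∈ Set.Ico (0:ℝ) S, HasDerivWithinAt u' (u'' t) (Set.Ico 0 S) t) →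
        ContinuousOn u'' (Set.Ico 0 S) →
        (∀ t ∈ Set.Ico (0:ℝ) S,
          ε • u'' t + ((1+t) ^ (-p)) • u' t + (⟪A (u t), u t⟫ ^ γ) • A (u t) = 0) →
        (∀ t ∈ Set.Ico (0:ℝ) S, 0 < ⟪A (u t), u t⟫) →
        (∀ t ∈ Set.Ico (0:ℝ) S,
          |⟪u' t, A (u t)⟫| / ⟪A (u t), u t⟫ ≤ K₀ / (1+t)) →
        (∀ t ∈ Set.Ico (0:ℝ) S,
          ⟪A (u t), u t⟫ ^ (γ-1) * ‖A (u t)‖ ^ 2 ≤ K₁ * (1+t) ^ (-(p+1))) →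
        ∀ t ∈ Set.Ico (0:ℝ) S,
          (ε * ⟪A (u' t), u' t⟫ / ⟪A (u t), u t⟫ +
            ⟪A (u t), u t⟫ ^ (γ-1) * ‖A (u t)‖ ^ 2) * (1+t) ^ (p+1) ≤ L := by
  classical
  have hC : (0:ℝ) < 2*K₀*γ + p + 1 := by nlinarith
  refine ⟨min 1 (1/(2*K₀*γ + p + 1)), lt_min one_pos (by positivity),
    max (⟪A u₁, u₁⟫ / ⟪A u₀, u₀⟫ + ⟪A u₀, u₀⟫ ^ (γ-1) * ⟪A u₀, A u₀⟫) (2*K₁),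
    lt_max_of_lt_right (by linarith), ?_⟩
  intro ε hε hεε₀ S hS u u' u'' hu0 hu'0 hu hu' _ heq hpos h310 h311 t ht
  set L := max (⟪A u₁, u₁⟫ / ⟪A u₀, u₀⟫ + ⟪A u₀, u₀⟫ ^ (γ-1) * ⟪A u₀, A u₀⟫) (2*K₁)
    with hLdef
  have hε1 : ε ≤ 1 := hεε₀.trans (min_le_left _ _)
  have hεC : ε * (2*K₀*γ + p + 1) ≤ 1 := by
    have h2 : ε ≤ 1/(2*K₀*γ+p+1) := hεε₀.trans (min_le_right _ _)
    rw [le_div_iff₀ hC] at h2; exact h2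
  -- the energy function (with `‖·‖²` written as an inner product)
  set F : ℝ → ℝ := fun r => (ε * ⟪A (u' r), u' r⟫ / ⟪A (u r), u r⟫ +
      ⟪A (u r), u r⟫ ^ (γ-1) * ⟪A (u r), A (u r)⟫) * (1+r) ^ (p+1) with hFdef
  -- key step: at every point there is a one-sided derivative of the energy, which is
  -- nonpositive whenever the energy is at least `L`.
  have key : ∀ τ ∈ Set.Ico (0:ℝ) S, ∃ D : ℝ,
      HasDerivWithinAt F D (Set.Ico 0 S) τ ∧ (L ≤ F τ → D ≤ 0) := by
    intro τ hτ
    have hc0 : 0 < ⟪A (u τ), u τ⟫ := hpos τ hτ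
    have hs1pos : (0:ℝ) < 1 + τ := by linarith [hτ.1]
    have hs1 : (1:ℝ) ≤ 1 + τ := by linarith [hτ.1]
    refine ⟨(((ε * (2 * ⟪A (u' τ), u'' τ⟫) * ⟪A (u τ), u τ⟫
            - ε * ⟪A (u' τ), u' τ⟫ * (2 * ⟪A (u τ), u' τ⟫)) / ⟪A (u τ), u τ⟫ ^ 2
          + (2 * ⟪A (u τ), u' τ⟫ * (γ - 1) * (⟪A (u τ), u τ⟫ ^ (γ-1) / ⟪A (u τ), u τ⟫)
              * ⟪A (u τ), A (u τ)⟫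
            + ⟪A (u τ), u τ⟫ ^ (γ-1) * (2 * ⟪A (u' τ), A (u τ)⟫))) * (1+τ) ^ (p+1)
        + (ε * ⟪A (u' τ), u' τ⟫ / ⟪A (u τ), u τ⟫
            + ⟪A (u τ), u τ⟫ ^ (γ-1) * ⟪A (u τ), A (u τ)⟫) * (1 * (p + 1) * (1+τ) ^ p)),
      ?_, ?_⟩
    · -- the derivative computation
      have hAu : HasDerivWithinAt (fun r => A (u r)) (A (u' τ)) (Set.Ico 0 S) τ :=
        A.hasFDerivAt.comp_hasDerivWithinAt τ (hu τ hτ)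
      have hAu' : HasDerivWithinAt (fun r => A (u' r)) (A (u'' τ)) (Set.Ico 0 S) τ :=
        A.hasFDerivAt.comp_hasDerivWithinAt τ (hu' τ hτ)
      have hc2 : HasDerivWithinAt (fun r => ⟪A (u r), u r⟫) (2 * ⟪A (u τ), u' τ⟫)
          (Set.Ico 0 S) τ := by
        have h := hAu.inner ℝ (hu τ hτ)
        refine h.congr_deriv ?_
        rw [hA_sa, real_inner_comm (u τ) (A (u' τ))]
        ring
      have ha2 : HasDerivWithinAt (fun r => ⟪A (u' r), u' r⟫) (2 * ⟪A (u' τ), u'' τ⟫)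
          (Set.Ico 0 S) τ := by
        have h := hAu'.inner ℝ (hu' τ hτ)
        refine h.congr_deriv ?_
        rw [hA_sa, real_inner_comm (u' τ) (A (u'' τ))]
        ring
      have hb2 : HasDerivWithinAt (fun r => ⟪A (u r), A (u r)⟫)
          (2 * ⟪A (u' τ), A (u τ)⟫) (Set.Ico 0 S) τ := by
        have h := hAu.inner ℝ hAu
        refine h.congr_deriv ?_
        rw [real_inner_comm (A (u τ)) (A (u' τ))]
        ring
      have hdiv : HasDerivWithinAt
          (fun r => ε * ⟪A (u' r), u' r⟫ / ⟪A (u r), u r⟫)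
          ((ε * (2 * ⟪A (u' τ), u'' τ⟫) * ⟪A (u τ), u τ⟫
              - ε * ⟪A (u' τ), u' τ⟫ * (2 * ⟪A (u τ), u' τ⟫)) / ⟪A (u τ), u τ⟫ ^ 2)
          (Set.Ico 0 S) τ := (ha2.const_mul ε).div hc2 hc0.ne'
      have hpow : HasDerivWithinAt (fun r => ⟪A (u r), u r⟫ ^ (γ-1))
          (2 * ⟪A (u τ), u' τ⟫ * (γ-1) * ⟪A (u τ), u τ⟫ ^ (γ-1-1)) (Set.Ico 0 S) τ :=
        hc2.rpow_const (Or.inl hc0.ne')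
      have hmul := hpow.mul hb2
      have hout : HasDerivWithinAt (fun r : ℝ => 1 + r) 1 (Set.Ico 0 S) τ :=
        (hasDerivWithinAt_id τ _).const_add 1
      have hrp : HasDerivWithinAt (fun r : ℝ => (1+r) ^ (p+1))
          (1 * (p+1) * (1+τ) ^ (p+1-1)) (Set.Ico 0 S) τ :=
        hout.rpow_const (Or.inr (by linarith))
      have hFd := (hdiv.add hmul).mul hrp
      rw [hFdef]
      refine hFd.congr_deriv ?_
      have hBeq : ⟪A (u τ), u τ⟫ ^ (γ-1-1)
          = ⟪A (u τ), u τ⟫ ^ (γ-1) / ⟪A (u τ), u τ⟫ := by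
        rw [eq_div_iff hc0.ne', ← Real.rpow_add_one hc0.ne']
        norm_num
      rw [show p + 1 - 1 = p by ring, hBeq]
      rfl
    · -- the derivative is nonpositive when the energy is large
      intro hLF
      have hP : (0:ℝ) < ⟪A (u τ), u τ⟫ ^ (γ-1) := Real.rpow_pos_of_pos hc0 _
      have hsp : (0:ℝ) < (1+τ) ^ p := Real.rpow_pos_of_pos hs1pos _
      have hQ : (0:ℝ) < (1+τ) ^ (p+1) := Real.rpow_pos_of_pos hs1pos _
      -- the equation, tested against `A u'`
      have h0 := congrArg (fun v : H => ⟪A (u' τ), v⟫) (heq τ hτ)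
      simp only [inner_add_right, real_inner_smul_right, inner_zero_right] at h0
      have hPγ : ⟪A (u τ), u τ⟫ ^ γ = ⟪A (u τ), u τ⟫ ^ (γ-1) * ⟪A (u τ), u τ⟫ := by
        rw [← Real.rpow_add_one hc0.ne' (γ-1)]
        norm_num
      rw [hPγ] at h0
      have hw : ε * ⟪A (u' τ), u'' τ⟫ = -((1+τ) ^ (-p) * ⟪A (u' τ), u' τ⟫)
          - ⟪A (u τ), u τ⟫ ^ (γ-1) * ⟪A (u τ), u τ⟫ * ⟪A (u' τ), A (u τ)⟫ := by
        linarith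
      -- hypothesis (3.10)
      have hd : |⟪A (u τ), u' τ⟫| ≤ K₀ * ⟪A (u τ), u τ⟫ / (1+τ) := by
        have h1 := h310 τ hτ
        rw [real_inner_comm (A (u τ)) (u' τ)] at h1
        rw [div_le_div_iff₀ hc0 hs1pos] at h1
        rw [le_div_iff₀ hs1pos]
        linarith
      -- hypothesis (3.11)
      have hY : ⟪A (u τ), u τ⟫ ^ (γ-1) * ⟪A (u τ), A (u τ)⟫ * (1+τ) ^ (p+1) ≤ K₁ := by
        have h1 := h311 τ hτ
        rw [← real_inner_self_eq_norm_sq] at h1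
        have h2 := mul_le_mul_of_nonneg_right h1 hQ.le
        have h3 : K₁ * (1+τ) ^ (-(p+1)) * (1+τ) ^ (p+1) = K₁ := by
          rw [mul_assoc, ← Real.rpow_add hs1pos, show -(p+1)+(p+1) = (0:ℝ) by ring,
            Real.rpow_zero, mul_one]
        linarith
      have hL2 : 2 * K₁ ≤ (ε * ⟪A (u' τ), u' τ⟫ / ⟪A (u τ), u τ⟫
          + ⟪A (u τ), u τ⟫ ^ (γ-1) * ⟪A (u τ), A (u τ)⟫) * (1+τ) ^ (p+1) := by
        have h2KL : 2*K₁ ≤ L := by rw [hLdef]; exact le_max_right _ _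
        have hLF' : L ≤ (ε * ⟪A (u' τ), u' τ⟫ / ⟪A (u τ), u τ⟫
            + ⟪A (u τ), u τ⟫ ^ (γ-1) * ⟪A (u τ), A (u τ)⟫) * (1+τ) ^ (p+1) := by
          rw [hFdef] at hLF
          exact hLF
        exact le_trans h2KL hLF'
      have hsnpQ : (1+τ) ^ (-p) * (1+τ) ^ (p+1) = 1+τ := by
        rw [← Real.rpow_add hs1pos, show -p+(p+1) = (1:ℝ) by ring, Real.rpow_one]
      have hspQ : (1+τ) ^ p * (1+τ) = (1+τ) ^ (p+1) :=
        (Real.rpow_add_one hs1pos.ne' p).symm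
      have hsple : (1+τ) ^ p ≤ 1+τ := by
        have := Real.rpow_le_rpow_of_exponent_le hs1 hp1
        rwa [Real.rpow_one] at this
      exact apriori_H_estimate_scalar_bound p γ ε K₀ K₁ (1+τ)
        ⟪A (u' τ), u' τ⟫ ⟪A (u τ), A (u τ)⟫ ⟪A (u τ), u τ⟫ ⟪A (u τ), u' τ⟫
        ⟪A (u' τ), A (u τ)⟫ ⟪A (u' τ), u'' τ⟫ (⟪A (u τ), u τ⟫ ^ (γ-1))
        ((1+τ) ^ (-p)) ((1+τ) ^ p) ((1+τ) ^ (p+1))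
        hp0 hγ hK₀ hε hεC hs1 (hA_nn _) real_inner_self_nonneg hc0 hP hsp hQ
        hsnpQ hspQ hsple hd hw hY hL2
  -- a measurable choice of the derivative
  choose! Df hDf using key
  -- the comparison argument on `[0, t]`
  have hsub : Set.Icc (0:ℝ) t ⊆ Set.Ico 0 S := fun z hz => ⟨hz.1, lt_of_le_of_lt hz.2 ht.2⟩
  have hcont : ContinuousOn F (Set.Icc 0 t) := fun z hz =>
    ((hDf z (hsub hz)).1.continuousWithinAt).mono hsub
  have hderiv : ∀ x ∈ Set.Ico (0:ℝ) t, HasDerivWithinAt F (Df x) (Set.Ici x) x := by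
    intro x hx
    have hx' : x ∈ Set.Ico (0:ℝ) S := ⟨hx.1, hx.2.trans ht.2⟩
    refine (hDf x hx').1.mono_of_mem_nhdsWithin ?_
    rw [mem_nhdsWithin]
    exact ⟨Set.Iio S, isOpen_Iio, hx'.2, fun z hz => ⟨le_trans hx.1 hz.2, hz.1⟩⟩
  have hF0 : F 0 ≤ L := by
    rw [hFdef]
    simp only [hu0, hu'0]
    rw [show (1:ℝ) + 0 = 1 by norm_num, Real.one_rpow, mul_one]
    refine le_trans ?_ (le_max_left _ _)
    have h1 : ε * ⟪A u₁, u₁⟫ / ⟪A u₀, u₀⟫ ≤ ⟪A u₁, u₁⟫ / ⟪A u₀, u₀⟫ := by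
      gcongr
      nlinarith [hA_nn u₁]
    linarith
  have hband : ∀ δ : ℝ, 0 < δ → F t ≤ L + δ * Real.exp t := by
    intro δ hδ
    have hB : ∀ x : ℝ, HasDerivAt (fun r => L + δ * Real.exp r) (δ * Real.exp x) x :=
      fun x => ((Real.hasDerivAt_exp x).const_mul δ).const_add L
    have hbound : ∀ x ∈ Set.Ico (0:ℝ) t, F x = L + δ * Real.exp x →
        Df x < δ * Real.exp x := by
      intro x hx hFx
      have hx' : x ∈ Set.Ico (0:ℝ) S := ⟨hx.1, hx.2.trans ht.2⟩
      have h1 : L ≤ F x := by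
        rw [hFx]
        linarith [mul_pos hδ (Real.exp_pos x)]
      exact lt_of_le_of_lt ((hDf x hx').2 h1) (mul_pos hδ (Real.exp_pos x))
    have h0le : F 0 ≤ L + δ * Real.exp 0 := by
      rw [Real.exp_zero]; linarith
    have hmain := image_le_of_deriv_right_lt_deriv_boundary hcont hderiv h0le hB hbound
    exact hmain ⟨ht.1, le_refl t⟩
  have hFt : F t ≤ L := by
    by_contra hlt
    push_neg at hlt
    have hexp := Real.exp_pos t
    have h2 := hband ((F t - L)/(2*Real.exp t)) (div_pos (by linarith) (by positivity))
    have h3 : (F t - L)/(2*Real.exp t)*Real.exp t = (F t - L)/2 := by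
      field_simp
    rw [h3] at h2
    linarith
  rw [← real_inner_self_eq_norm_sq]
  rw [hFdef] at hFt
  exact hFt
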